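/- Let P be a feedback family and Q a forward family. For every Borel probability measure λ on Y_{0,n}, I(←P, →Q) ≤ D(←P⊗→Q ‖ ←P⊗λ), and I(←P, →Q) = inf_λ D(←P⊗→Q ‖ ←P⊗λ), where the infimum is over all Borel probability measures λ on Y_{0,n} and is attained at λ = ν_{0,n}, the Y_{0,n}-marginal of ←P⊗→Q. -/

import Mathlib

open MeasureTheory ProbabilityTheory Filter
open scoped ENNReal NNReal

namespace PaperDI

lemma measurable_finSnoc {Z : ℕ → Type*} [∀ i, MeasurableSpace (Z i)] (k : ℕ) :
    Measurable (fun p : (∀ j : Fin k, Z j) × Z k =>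
      (Fin.snoc p.1 p.2 : ∀ j : Fin (k + 1), Z j)) := by
  apply measurable_pi_lambda
  intro j
  induction j using Fin.lastCases with
  | last => simpa using measurable_snd
  | cast i => simp <;> exact (measurable_pi_apply i).comp measurable_fst

/-- Restriction of a prefix of length `k+1` to the prefix of length `k`. -/
def restr {Z : ℕ → Type*} (k : ℕ) (z : ∀ j : Fin (k + 1), Z j) : ∀ j : Fin k, Z j :=
  fun j => z j.castSucc

lemma measurable_restr {Z : ℕ → Type*} [∀ i, MeasurableSpace (Z i)] (k : ℕ) :
    Measurable (restr (Z := Z) k) :=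
  measurable_pi_lambda _ fun _ => measurable_pi_apply _

variable (X Y : ℕ → Type*) [∀ i, MeasurableSpace (X i)] [∀ i, MeasurableSpace (Y i)]

/-- A feedback family `(p_0, …, p_n)`: `p_0` is a probability measure on `X_0` (a Markov
kernel from the one-point space of empty prefixes) and `p_i` is a Markov kernel from
`X_{0,i-1} × Y_{0,i-1}` to `X_i`. -/
structure FeedbackFamily (n : ℕ) where
  p : ∀ i : Fin (n + 1), Kernel ((∀ j : Fin (i : ℕ), X j) × (∀ j : Fin (i : ℕ), Y j)) (X i)
  markov : ∀ i, IsMarkovKernel (p i)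

/-- A forward family `(q_0, …, q_n)`: `q_i` is a Markov kernel from
`Y_{0,i-1} × X_{0,i}` to `Y_i`. -/
structure ForwardFamily (n : ℕ) where
  q : ∀ i : Fin (n + 1), Kernel ((∀ j : Fin (i : ℕ), Y j) × (∀ j : Fin ((i : ℕ) + 1), X j)) (Y i)
  markov : ∀ i, IsMarkovKernel (q i)

variable {X Y} {n : ℕ}

/-- The causally conditioned kernel `←P_{0,k}` from `Y_{0,k-1}` to `X_{0,k}`. -/
noncomputable def back (P : FeedbackFamily X Y n) :
    (k : ℕ) → k ≤ n → Kernel (∀ j : Fin k, Y j) (∀ j : Fin (k + 1), X j)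
  | 0, _ =>
      Kernel.map ((P.p ⟨0, Nat.succ_pos n⟩).comap (fun _ => default) measurable_const)
        (fun x0 => (Fin.snoc default x0 : ∀ j : Fin 1, X j))
  | (k + 1), h =>
      Kernel.map
        (((back P k (by omega)).comap (restr k) (measurable_restr k)) ⊗ₖ
          ((P.p ⟨k + 1, by omega⟩).comap
            (fun t : (∀ j : Fin (k + 1), Y j) × (∀ j : Fin (k + 1), X j) => (t.2, t.1))
            (measurable_snd.prodMk measurable_fst)))
        (fun t : (∀ j : Fin (k + 1), X j) × X (k + 1) =>
          (Fin.snoc t.1 t.2 : ∀ j : Fin (k + 2), X j))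

/-- The causally conditioned kernel `→Q_{0,k}` from `X_{0,k}` to `Y_{0,k}`. -/
noncomputable def fwd (Q : ForwardFamily X Y n) :
    (k : ℕ) → k ≤ n → Kernel (∀ j : Fin (k + 1), X j) (∀ j : Fin (k + 1), Y j)
  | 0, _ =>
      Kernel.map ((Q.q ⟨0, Nat.succ_pos n⟩).comap (fun x => (default, x))
          (measurable_const.prodMk measurable_id))
        (fun y0 => (Fin.snoc default y0 : ∀ j : Fin 1, Y j))
  | (k + 1), h =>
      Kernel.map
        (((fwd Q k (by omega)).comap (restr (k + 1)) (measurable_restr (k + 1))) ⊗ₖ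
          ((Q.q ⟨k + 1, by omega⟩).comap
            (fun t : (∀ j : Fin (k + 2), X j) × (∀ j : Fin (k + 1), Y j) => (t.2, t.1))
            (measurable_snd.prodMk measurable_fst)))
        (fun t : (∀ j : Fin (k + 1), Y j) × Y (k + 1) =>
          (Fin.snoc t.1 t.2 : ∀ j : Fin (k + 2), Y j))

/-- The interleaved joint measure of `←P ⊗ →Q` on prefixes of length `k`. -/
noncomputable def jointAux (P : FeedbackFamily X Y n) (Q : ForwardFamily X Y n) :
    (k : ℕ) → k ≤ n + 1 → Measure ((∀ j : Fin k, X j) × (∀ j : Fin k, Y j))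
  | 0, _ => Measure.dirac default
  | (k + 1), h =>
      let μ1 := (jointAux P Q k (by omega)) ⊗ₘ (P.p ⟨k, by omega⟩)
      let μ2 := μ1.map
          (fun t : ((∀ j : Fin k, X j) × (∀ j : Fin k, Y j)) × X k =>
            (t.1.2, (Fin.snoc t.1.1 t.2 : ∀ j : Fin (k + 1), X j)))
      let μ3 := μ2 ⊗ₘ (Q.q ⟨k, by omega⟩)
      μ3.map
          (fun t : ((∀ j : Fin k, Y j) × (∀ j : Fin (k + 1), X j)) × Y k =>
            (t.1.2, (Fin.snoc t.1.1 t.2 : ∀ j : Fin (k + 1), Y j)))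

/-- The joint measure `←P ⊗ →Q` on `X_{0,n} × Y_{0,n}`. -/
noncomputable def joint (P : FeedbackFamily X Y n) (Q : ForwardFamily X Y n) :
    Measure ((∀ j : Fin (n + 1), X j) × (∀ j : Fin (n + 1), Y j)) :=
  jointAux P Q (n + 1) le_rfl

/-- The marginal `ν_{0,n}` of `←P ⊗ →Q` on `Y_{0,n}`. -/
noncomputable def nu (P : FeedbackFamily X Y n) (Q : ForwardFamily X Y n) :
    Measure (∀ j : Fin (n + 1), Y j) :=
  (joint P Q).map Prod.snd

/-- The measure `←P ⊗ λ` on `X_{0,n} × Y_{0,n}`, i.e. the measure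
`←P_{0,n}(dx^n | y^{n-1}) ⊗ λ(dy^n)`. -/
noncomputable def backProd (P : FeedbackFamily X Y n) (lam : Measure (∀ j : Fin (n + 1), Y j)) :
    Measure ((∀ j : Fin (n + 1), X j) × (∀ j : Fin (n + 1), Y j)) :=
  (lam ⊗ₘ ((back P n le_rfl).comap (restr n) (measurable_restr n))).map Prod.swap

open Classical in
/-- Kullback-Leibler divergence (relative entropy) `D(μ ‖ ν)`, with the convention
`D(μ ‖ ν) = ∞` when absolute continuity fails. -/
noncomputable def KL {Z : Type*} [MeasurableSpace Z] (μ ν : Measure Z) : ℝ≥0∞ :=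
  if μ ≪ ν ∧ Integrable (llr μ ν) μ then ENNReal.ofReal (∫ z, llr μ ν z ∂μ) else ⊤

/-- Directed information `I(←P, →Q) = D(←P ⊗ →Q ‖ ←P ⊗ ν_{0,n})`. -/
noncomputable def DI (P : FeedbackFamily X Y n) (Q : ForwardFamily X Y n) : ℝ≥0∞ :=
  KL (joint P Q) (backProd P (nu P Q))

/-- Weak convergence of a sequence of measures: integrals of every bounded continuous
real-valued function converge. -/
def WeakTendsto {Z : Type*} [MeasurableSpace Z] [TopologicalSpace Z]
    (μ : ℕ → Measure Z) (μ0 : Measure Z) : Prop :=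
  ∀ f : BoundedContinuousFunction Z ℝ,
    Tendsto (fun α => ∫ z, f z ∂(μ α)) atTop (nhds (∫ z, f z ∂μ0))

/-- Uniform tightness of a family of measures. -/
def UniformlyTight {Z : Type*} [MeasurableSpace Z] [TopologicalSpace Z]
    (M : Set (Measure Z)) : Prop :=
  ∀ ε : ℝ≥0∞, 0 < ε → ∃ K : Set Z, IsCompact K ∧ ∀ μ ∈ M, 1 - ε ≤ μ K

/-- The marginal `π_i` of `←P ⊗ →Q` on `X_{0,i} × Y_{0,i-1}`. -/
noncomputable def margin (P : FeedbackFamily X Y n) (Q : ForwardFamily X Y n) (i : Fin (n + 1)) :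
    Measure ((∀ j : Fin ((i : ℕ) + 1), X j) × (∀ j : Fin (i : ℕ), Y j)) :=
  (joint P Q).map (fun t =>
    ((fun j : Fin ((i : ℕ) + 1) => t.1 (Fin.castLE i.isLt j)),
     (fun j : Fin (i : ℕ) => t.2 (Fin.castLE i.isLt.le j))))

/-- The iterated product measure of a tuple of kernels `(λ_0, …, λ_n)`,
`λ_i : Y_{0,i-1} → Y_i`, on prefixes of length `k`. -/
noncomputable def chain {Z : ℕ → Type*} [∀ i, MeasurableSpace (Z i)] {n : ℕ}
    (lam : ∀ i : Fin (n + 1), Kernel (∀ j : Fin (i : ℕ), Z j) (Z i)) :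
    (k : ℕ) → k ≤ n + 1 → Measure (∀ j : Fin k, Z j)
  | 0, _ => Measure.dirac default
  | (k + 1), h =>
      ((chain lam k (by omega)) ⊗ₘ (lam ⟨k, by omega⟩)).map
        (fun t : (∀ j : Fin k, Z j) × Z k => (Fin.snoc t.1 t.2 : ∀ j : Fin (k + 1), Z j))

/-- The joint measure `←S ⊗ →R` on `X_{0,n} × Y_{0,n}` determined by a reversed pair
`(S, R)`; a reversed pair is formally a feedback family and a forward family with the
roles of `X` and `Y` interchanged. -/
noncomputable def revJoint (S : FeedbackFamily Y X n) (R : ForwardFamily Y X n) :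
    Measure ((∀ j : Fin (n + 1), X j) × (∀ j : Fin (n + 1), Y j)) :=
  (joint S R).map Prod.swap

/-- `∫ log(dσ/dπ) dμ`, as an extended real number (integral of the positive part minus
integral of the negative part). -/
noncomputable def elogInt {Z : Type*} [MeasurableSpace Z] (σ π μ : Measure Z) : EReal :=
  ((∫⁻ z, ENNReal.ofReal (llr σ π z) ∂μ : ℝ≥0∞) : EReal) -
    ((∫⁻ z, ENNReal.ofReal (-llr σ π z) ∂μ : ℝ≥0∞) : EReal)

/-- `∫ |log(dμ/dν)| dμ`. -/
noncomputable def absKL {Z : Type*} [MeasurableSpace Z] (μ ν : Measure Z) : ℝ≥0∞ :=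
  ∫⁻ z, ENNReal.ofReal |llr μ ν z| ∂μ

section Topology

variable [∀ i, TopologicalSpace (X i)] [∀ i, TopologicalSpace (Y i)]

/-- Condition (CA): each `p_i` is weakly (Feller) continuous in the conditioning
variables `(x^{i-1}, y^{i-1})`. -/
def CondCA (P : FeedbackFamily X Y n) : Prop :=
  ∀ (i : Fin (n + 1)) (g : BoundedContinuousFunction (X i) ℝ),
    Continuous (fun t : (∀ j : Fin (i : ℕ), X j) × (∀ j : Fin (i : ℕ), Y j) =>
      ∫ x, g x ∂(P.p i t))

/-- Condition (CB): each `q_i` is weakly (Feller) continuous in the conditioning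
variables `(x^i, y^{i-1})`. -/
def CondCB (Q : ForwardFamily X Y n) : Prop :=
  ∀ (i : Fin (n + 1)) (g : BoundedContinuousFunction (Y i) ℝ),
    Continuous (fun t : (∀ j : Fin ((i : ℕ) + 1), X j) × (∀ j : Fin (i : ℕ), Y j) =>
      ∫ y, g y ∂(Q.q i (t.2, t.1)))

end Topology

section AuxKL


lemma lintegral_ofReal_neg_llr_le {α : Type*} [MeasurableSpace α]
    {μ ν : Measure α} [IsProbabilityMeasure μ] [IsProbabilityMeasure ν]
    (hμν : μ ≪ ν) :
    ∫⁻ x, ENNReal.ofReal (-(llr μ ν x)) ∂μ ≤ 1 := by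
  have hmeas : AEMeasurable (fun x => ENNReal.ofReal (-(llr μ ν x))) ν :=
    (ENNReal.measurable_ofReal.comp ((measurable_llr μ ν).neg)).aemeasurable
  rw [← lintegral_rnDeriv_mul hμν hmeas]
  calc ∫⁻ x, μ.rnDeriv ν x * ENNReal.ofReal (-(llr μ ν x)) ∂ν
      ≤ ∫⁻ _, 1 ∂ν := by
        refine lintegral_mono_ae ?_
        filter_upwards [Measure.rnDeriv_lt_top μ ν] with x hx
        set t := (μ.rnDeriv ν x).toReal with ht
        have ht0 : 0 ≤ t := ENNReal.toReal_nonneg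
        have hrn : μ.rnDeriv ν x = ENNReal.ofReal t := by
          rw [ht, ENNReal.ofReal_toReal hx.ne]
        rcases eq_or_lt_of_le ht0 with h0 | h0
        · rw [hrn, ← h0]; simp
        · have hlog : -(llr μ ν x) ≤ 1 / t := by
            have h := Real.log_le_sub_one_of_pos (x := 1 / t) (by positivity)
            rw [Real.log_div one_ne_zero (ne_of_gt h0), Real.log_one, zero_sub] at h
            have : -(llr μ ν x) = -Real.log t := by rw [llr]
            linarith
          calc μ.rnDeriv ν x * ENNReal.ofReal (-(llr μ ν x))
              ≤ ENNReal.ofReal t * ENNReal.ofReal (1 / t) :=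
                mul_le_mul (le_of_eq hrn) (ENNReal.ofReal_le_ofReal hlog) zero_le zero_le
            _ = ENNReal.ofReal (t * (1 / t)) := (ENNReal.ofReal_mul ht0).symm
            _ = 1 := by rw [mul_one_div_cancel (ne_of_gt h0), ENNReal.ofReal_one]
    _ = 1 := by simp

lemma integral_llr_nonneg' {α : Type*} [MeasurableSpace α] {μ ν : Measure α}
    [IsProbabilityMeasure μ] [IsProbabilityMeasure ν] (hμν : μ ≪ ν)
    (hint : Integrable (llr μ ν) μ) : 0 ≤ ∫ x, llr μ ν x ∂μ := by
  have hexp : (fun x => Real.exp (-(llr μ ν x))) =ᵐ[μ] fun x => (ν.rnDeriv μ x).toReal :=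
    exp_neg_llr hμν
  have hint_exp : Integrable (fun x => Real.exp (-(llr μ ν x))) μ :=
    Measure.integrable_toReal_rnDeriv.congr hexp.symm
  have h1 : ∫ x, (1 - Real.exp (-(llr μ ν x))) ∂μ ≤ ∫ x, llr μ ν x ∂μ := by
    refine integral_mono ((integrable_const 1).sub hint_exp) hint fun x => ?_
    have := Real.add_one_le_exp (-(llr μ ν x))
    simp only
    linarith
  have h2 : ∫ x, (ν.rnDeriv μ x).toReal ∂μ ≤ 1 := by
    calc ∫ x, (ν.rnDeriv μ x).toReal ∂μ
        = ∫ x in Set.univ, (ν.rnDeriv μ x).toReal ∂μ := by rw [setIntegral_univ]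
      _ ≤ (ν Set.univ).toReal := Measure.setIntegral_toReal_rnDeriv_le (measure_ne_top _ _)
      _ = 1 := by simp
  have h3 : ∫ x, (1 - Real.exp (-(llr μ ν x))) ∂μ
      = 1 - ∫ x, Real.exp (-(llr μ ν x)) ∂μ := by
    rw [integral_sub (integrable_const 1) hint_exp, integral_const]
    simp
  have h4 : ∫ x, Real.exp (-(llr μ ν x)) ∂μ ≤ 1 := by
    rw [integral_congr_ae hexp]; exact h2
  linarith

lemma withDensity_compProd_left {α β : Type*} [MeasurableSpace α] [MeasurableSpace β]
    (lam : Measure α) [SFinite lam] (κ : Kernel α β) [IsSFiniteKernel κ]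
    {ρ : α → ℝ≥0∞} (hρ : Measurable ρ) :
    (lam.withDensity ρ) ⊗ₘ κ = (lam ⊗ₘ κ).withDensity (fun p => ρ p.1) := by
  ext s hs
  rw [Measure.compProd_apply hs, withDensity_apply _ hs,
    lintegral_withDensity_eq_lintegral_mul lam hρ (Kernel.measurable_kernel_prodMk_left hs),
    ← lintegral_indicator hs,
    Measure.lintegral_compProd (show Measurable (s.indicator fun p : α × β => ρ p.1) from
      (hρ.comp measurable_fst).indicator hs)]
  refine lintegral_congr fun a => ?_
  have h : (fun b => s.indicator (fun p : α × β => ρ p.1) (a, b))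
      = (Prod.mk a ⁻¹' s).indicator (fun _ => ρ a) := by
    funext b
    by_cases hb : (a, b) ∈ s
    · rw [Set.indicator_of_mem hb, Set.indicator_of_mem (by exact hb)]
    · rw [Set.indicator_of_notMem hb, Set.indicator_of_notMem (by exact hb)]
  simp only [Pi.mul_apply]
  rw [h, lintegral_indicator (measurable_prodMk_left hs), setLIntegral_const]

lemma map_swap_withDensity {α β : Type*} [MeasurableSpace α] [MeasurableSpace β]
    (m : Measure (α × β)) {g : α × β → ℝ≥0∞} (hg : Measurable g) :
    (m.withDensity g).map Prod.swap
      = (m.map Prod.swap).withDensity (fun p => g p.swap) := by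
  ext s hs
  rw [Measure.map_apply measurable_swap hs, withDensity_apply _ (measurable_swap hs),
    withDensity_apply _ hs,
    setLIntegral_map hs (show Measurable fun p : β × α => g p.swap from
      hg.comp measurable_swap) measurable_swap]
  refine setLIntegral_congr_fun (measurable_swap hs) (fun x _ => ?_)
  simp





lemma ofReal_le_ofReal_add_ofReal_neg (a b : ℝ) :
    ENNReal.ofReal a ≤ ENNReal.ofReal (a + b) + ENNReal.ofReal (-b) := by
  calc ENNReal.ofReal a = ENNReal.ofReal ((a + b) + (-b)) := by ring_nf
    _ ≤ _ := ENNReal.ofReal_add_le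

lemma nnnorm_le_ofReal_add_ofReal_neg (a : ℝ) :
    (‖a‖₊ : ℝ≥0∞) ≤ ENNReal.ofReal a + ENNReal.ofReal (-a) := by
  rw [← enorm_eq_nnnorm, Real.enorm_eq_ofReal_abs]
  rcases abs_cases a with ⟨h, _⟩ | ⟨h, _⟩
  · rw [h]; exact le_add_right le_rfl
  · rw [h]; exact le_add_left le_rfl

lemma kl_comparison {γ δ : Type*} [MeasurableSpace γ] [MeasurableSpace δ]
    {μ Bn Bl : Measure γ} {ν lam : Measure δ} {T : γ → δ} (hT : Measurable T)
    [IsProbabilityMeasure μ] [IsProbabilityMeasure Bl] [IsProbabilityMeasure Bn]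
    [IsProbabilityMeasure ν] [IsProbabilityMeasure lam]
    (hμT : μ.map T = ν) (hνlam : ν ≪ lam)
    (hBn : Bn = Bl.withDensity (fun z => ν.rnDeriv lam (T z)))
    (hac : μ ≪ Bl) (hint : Integrable (llr μ Bl) μ) :
    μ ≪ Bn ∧ Integrable (llr μ Bn) μ ∧ ∫ z, llr μ Bn z ∂μ ≤ ∫ z, llr μ Bl z ∂μ := by
  set ρ : δ → ℝ≥0∞ := ν.rnDeriv lam with hρ_def
  have hρ : Measurable ρ := Measure.measurable_rnDeriv ν lam
  have hν_wd : lam.withDensity ρ = ν := Measure.withDensity_rnDeriv_eq ν lam hνlam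
  have hBnBl : Bn ≪ Bl := hBn ▸ withDensity_absolutelyContinuous Bl _
  have hrnBn : Bn.rnDeriv Bl =ᵐ[Bl] fun z => ρ (T z) := by
    rw [hBn]; exact Measure.rnDeriv_withDensity Bl (hρ.comp hT)
  have hm0 : MeasurableSet {y | ρ y = 0} := hρ (measurableSet_singleton 0)
  have hzero : μ {z | ρ (T z) = 0} = 0 := by
    have h1 : μ {z | ρ (T z) = 0} = ν {y | ρ y = 0} := by
      rw [← hμT, Measure.map_apply hT hm0]; rfl
    rw [h1, ← hν_wd, withDensity_apply _ hm0,
      setLIntegral_congr_fun hm0 (fun y hy => hy)]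
    simp
  have hμBn : μ ≪ Bn := by
    refine Measure.AbsolutelyContinuous.mk fun s hs hs0 => ?_
    rw [hBn, withDensity_apply _ hs] at hs0
    have h_ae : (fun z => ρ (T z)) =ᵐ[Bl.restrict s] 0 :=
      (lintegral_eq_zero_iff (hρ.comp hT)).mp hs0
    have hmT : MeasurableSet {z | ρ (T z) = 0} := (hρ.comp hT) (measurableSet_singleton 0)
    have hBl0 : Bl ({z | ρ (T z) = 0}ᶜ ∩ s) = 0 := by
      have h2 : Bl.restrict s {z | ¬ ρ (T z) = 0} = 0 := by
        rw [Filter.EventuallyEq, ae_iff] at h_ae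
        simpa using h_ae
      rw [show {z | ¬ ρ (T z) = 0} = {z | ρ (T z) = 0}ᶜ from rfl,
        Measure.restrict_apply hmT.compl] at h2
      exact h2
    have hsub : s ⊆ ({z | ρ (T z) = 0}ᶜ ∩ s) ∪ {z | ρ (T z) = 0} := by
      intro z hz
      by_cases h : ρ (T z) = 0
      · exact Or.inr h
      · exact Or.inl ⟨h, hz⟩
    refine le_antisymm ?_ zero_le
    calc μ s ≤ μ (({z | ρ (T z) = 0}ᶜ ∩ s) ∪ {z | ρ (T z) = 0}) := measure_mono hsub
      _ ≤ μ ({z | ρ (T z) = 0}ᶜ ∩ s) + μ {z | ρ (T z) = 0} := measure_union_le _ _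
      _ = 0 := by rw [hac hBl0, hzero, add_zero]
  have hchain : μ.rnDeriv Bn * Bn.rnDeriv Bl =ᵐ[Bl] μ.rnDeriv Bl :=
    Measure.rnDeriv_mul_rnDeriv hμBn
  have hfin : ∀ᵐ z ∂μ, μ.rnDeriv Bn z < ∞ := hμBn.ae_le (Measure.rnDeriv_lt_top μ Bn)
  have hpos : ∀ᵐ z ∂μ, 0 < μ.rnDeriv Bn z := Measure.rnDeriv_pos hμBn
  have hρfin : ∀ᵐ z ∂μ, ρ (T z) < ∞ := by
    have h2 : ∀ᵐ y ∂ν, ρ y < ∞ := hνlam.ae_le (Measure.rnDeriv_lt_top ν lam)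
    rw [← hμT] at h2
    exact (ae_map_iff hT.aemeasurable (measurableSet_lt hρ measurable_const)).mp h2
  have hρpos : ∀ᵐ z ∂μ, 0 < ρ (T z) := by
    rw [ae_iff]
    have : {z | ¬ 0 < ρ (T z)} = {z | ρ (T z) = 0} := by
      ext z; simp [pos_iff_ne_zero]
    rw [this]; exact hzero
  have hrnμBl : ∀ᵐ z ∂μ, μ.rnDeriv Bl z = μ.rnDeriv Bn z * ρ (T z) := by
    filter_upwards [hac.ae_le hchain, hac.ae_le hrnBn] with z h1 h2
    rw [← h1, Pi.mul_apply, h2]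
  have hdecomp : llr μ Bl =ᵐ[μ] fun z => llr μ Bn z + llr ν lam (T z) := by
    filter_upwards [hrnμBl, hpos, hfin, hρpos, hρfin] with z h1 h2 h3 h4 h5
    simp only [llr]
    rw [h1, ENNReal.toReal_mul,
      Real.log_mul (ENNReal.toReal_pos h2.ne' h3.ne).ne' (ENNReal.toReal_pos h4.ne' h5.ne).ne']
  have hnegA : ∫⁻ z, ENNReal.ofReal (-(llr μ Bn z)) ∂μ ≤ 1 := lintegral_ofReal_neg_llr_le hμBn
  have hnegB : ∫⁻ z, ENNReal.ofReal (-(llr ν lam (T z))) ∂μ ≤ 1 := by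
    have h := lintegral_map (μ := μ) (g := T)
      (f := fun y => ENNReal.ofReal (-(llr ν lam y)))
      (show Measurable fun y => ENNReal.ofReal (-(llr ν lam y)) from
        ENNReal.measurable_ofReal.comp (measurable_llr ν lam).neg) hT
    rw [hμT] at h
    rw [← h]
    exact lintegral_ofReal_neg_llr_le hνlam
  have hposT : ∫⁻ z, ENNReal.ofReal (llr μ Bl z) ∂μ < ∞ := by
    calc ∫⁻ z, ENNReal.ofReal (llr μ Bl z) ∂μ ≤ ∫⁻ z, (‖llr μ Bl z‖₊ : ℝ≥0∞) ∂μ := by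
          refine lintegral_mono fun z => ?_
          rw [← enorm_eq_nnnorm, Real.enorm_eq_ofReal_abs]
          exact ENNReal.ofReal_le_ofReal (le_abs_self _)
      _ < ∞ := hint.2
  have hposA : ∫⁻ z, ENNReal.ofReal (llr μ Bn z) ∂μ < ∞ := by
    have hb : ∀ᵐ z ∂μ, ENNReal.ofReal (llr μ Bn z)
        ≤ ENNReal.ofReal (llr μ Bl z) + ENNReal.ofReal (-(llr ν lam (T z))) := by
      filter_upwards [hdecomp] with z hz
      calc ENNReal.ofReal (llr μ Bn z)
          ≤ ENNReal.ofReal (llr μ Bn z + llr ν lam (T z)) + ENNReal.ofReal (-(llr ν lam (T z))) :=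
            ofReal_le_ofReal_add_ofReal_neg _ _
        _ = _ := by rw [← hz]
    calc ∫⁻ z, ENNReal.ofReal (llr μ Bn z) ∂μ
        ≤ ∫⁻ z, (ENNReal.ofReal (llr μ Bl z) + ENNReal.ofReal (-(llr ν lam (T z)))) ∂μ :=
          lintegral_mono_ae hb
      _ = ∫⁻ z, ENNReal.ofReal (llr μ Bl z) ∂μ + ∫⁻ z, ENNReal.ofReal (-(llr ν lam (T z))) ∂μ :=
          lintegral_add_left (show Measurable fun z => ENNReal.ofReal (llr μ Bl z) from
            ENNReal.measurable_ofReal.comp (measurable_llr μ Bl)) _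
      _ < ∞ := ENNReal.add_lt_top.mpr ⟨hposT, hnegB.trans_lt ENNReal.one_lt_top⟩
  have hposB : ∫⁻ z, ENNReal.ofReal (llr ν lam (T z)) ∂μ < ∞ := by
    have hb : ∀ᵐ z ∂μ, ENNReal.ofReal (llr ν lam (T z))
        ≤ ENNReal.ofReal (llr μ Bl z) + ENNReal.ofReal (-(llr μ Bn z)) := by
      filter_upwards [hdecomp] with z hz
      calc ENNReal.ofReal (llr ν lam (T z))
          ≤ ENNReal.ofReal (llr ν lam (T z) + llr μ Bn z) + ENNReal.ofReal (-(llr μ Bn z)) :=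
            ofReal_le_ofReal_add_ofReal_neg _ _
        _ = _ := by rw [add_comm (llr ν lam (T z)), ← hz]
    calc ∫⁻ z, ENNReal.ofReal (llr ν lam (T z)) ∂μ
        ≤ ∫⁻ z, (ENNReal.ofReal (llr μ Bl z) + ENNReal.ofReal (-(llr μ Bn z))) ∂μ :=
          lintegral_mono_ae hb
      _ = ∫⁻ z, ENNReal.ofReal (llr μ Bl z) ∂μ + ∫⁻ z, ENNReal.ofReal (-(llr μ Bn z)) ∂μ :=
          lintegral_add_left (show Measurable fun z => ENNReal.ofReal (llr μ Bl z) from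
            ENNReal.measurable_ofReal.comp (measurable_llr μ Bl)) _
      _ < ∞ := ENNReal.add_lt_top.mpr ⟨hposT, hnegA.trans_lt ENNReal.one_lt_top⟩
  have hintA : Integrable (llr μ Bn) μ := by
    refine ⟨(stronglyMeasurable_llr _ _).aestronglyMeasurable, ?_⟩
    refine lt_of_le_of_lt (lintegral_mono fun z => nnnorm_le_ofReal_add_ofReal_neg _) ?_
    rw [lintegral_add_left (show Measurable fun z => ENNReal.ofReal (llr μ Bn z) from
      ENNReal.measurable_ofReal.comp (measurable_llr μ Bn))]
    exact ENNReal.add_lt_top.mpr ⟨hposA, hnegA.trans_lt ENNReal.one_lt_top⟩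
  have hintB : Integrable (fun z => llr ν lam (T z)) μ := by
    refine ⟨((stronglyMeasurable_llr _ _).comp_measurable hT).aestronglyMeasurable, ?_⟩
    refine lt_of_le_of_lt (lintegral_mono fun z => nnnorm_le_ofReal_add_ofReal_neg _) ?_
    rw [lintegral_add_left (show Measurable fun z => ENNReal.ofReal (llr ν lam (T z)) from
      ENNReal.measurable_ofReal.comp ((measurable_llr ν lam).comp hT))]
    exact ENNReal.add_lt_top.mpr ⟨hposB, hnegB.trans_lt ENNReal.one_lt_top⟩
  have hint_eq : ∫ z, llr μ Bl z ∂μ = ∫ z, llr μ Bn z ∂μ + ∫ z, llr ν lam (T z) ∂μ := by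
    rw [integral_congr_ae hdecomp, integral_add hintA hintB]
  have hBnonneg : 0 ≤ ∫ z, llr ν lam (T z) ∂μ := by
    have h := integral_map (μ := μ) (φ := T) (f := llr ν lam) hT.aemeasurable
      (stronglyMeasurable_llr ν lam).aestronglyMeasurable
    rw [hμT] at h
    rw [← h]
    refine integral_llr_nonneg' hνlam ?_
    have := (integrable_map_measure (stronglyMeasurable_llr ν lam).aestronglyMeasurable
      hT.aemeasurable).mpr hintB
    rwa [hμT] at this
  exact ⟨hμBn, hintA, by linarith⟩


end AuxKL


section AuxStruct

variable {X Y : ℕ → Type*} [∀ i, MeasurableSpace (X i)] [∀ i, MeasurableSpace (Y i)] {n : ℕ}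

lemma isMarkovKernel_back (P : FeedbackFamily X Y n) :
    ∀ (k : ℕ) (h : k ≤ n), IsMarkovKernel (back P k h)
  | 0, _ => by
      haveI := P.markov ⟨0, Nat.succ_pos n⟩
      rw [back]
      exact Kernel.IsMarkovKernel.map _
        ((measurable_finSnoc (Z := X) 0).comp (measurable_const.prodMk measurable_id))
  | (k + 1), h => by
      haveI := isMarkovKernel_back P k (by omega)
      haveI := P.markov ⟨k + 1, by omega⟩
      rw [back]
      exact Kernel.IsMarkovKernel.map _ (measurable_finSnoc (Z := X) (k + 1))

lemma isProbabilityMeasure_jointAux (P : FeedbackFamily X Y n) (Q : ForwardFamily X Y n) :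
    ∀ (k : ℕ) (h : k ≤ n + 1), IsProbabilityMeasure (jointAux P Q k h)
  | 0, _ => by
      rw [jointAux]
      infer_instance
  | (k + 1), h => by
      haveI := isProbabilityMeasure_jointAux P Q k (by omega)
      haveI := P.markov ⟨k, by omega⟩
      haveI := Q.markov ⟨k, by omega⟩
      have hf1 : Measurable (fun t : ((∀ j : Fin k, X j) × (∀ j : Fin k, Y j)) × X k =>
          (t.1.2, (Fin.snoc t.1.1 t.2 : ∀ j : Fin (k + 1), X j))) :=
        (measurable_snd.comp measurable_fst).prodMk
          ((measurable_finSnoc (Z := X) k).comp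
            ((measurable_fst.comp measurable_fst).prodMk measurable_snd))
      have hf2 : Measurable (fun t : ((∀ j : Fin k, Y j) × (∀ j : Fin (k + 1), X j)) × Y k =>
          (t.1.2, (Fin.snoc t.1.1 t.2 : ∀ j : Fin (k + 1), Y j))) :=
        (measurable_snd.comp measurable_fst).prodMk
          ((measurable_finSnoc (Z := Y) k).comp
            ((measurable_fst.comp measurable_fst).prodMk measurable_snd))
      haveI h2 : IsProbabilityMeasure
          (((jointAux P Q k (by omega)) ⊗ₘ (P.p ⟨k, by omega⟩)).map
            (fun t : ((∀ j : Fin k, X j) × (∀ j : Fin k, Y j)) × X k =>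
              (t.1.2, (Fin.snoc t.1.1 t.2 : ∀ j : Fin (k + 1), X j)))) :=
        Measure.isProbabilityMeasure_map hf1.aemeasurable
      haveI h3 : IsProbabilityMeasure
          ((((jointAux P Q k (by omega)) ⊗ₘ (P.p ⟨k, by omega⟩)).map
            (fun t : ((∀ j : Fin k, X j) × (∀ j : Fin k, Y j)) × X k =>
              (t.1.2, (Fin.snoc t.1.1 t.2 : ∀ j : Fin (k + 1), X j)))) ⊗ₘ (Q.q ⟨k, by omega⟩)) :=
        inferInstance
      rw [jointAux]
      exact Measure.isProbabilityMeasure_map hf2.aemeasurable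

lemma isProbabilityMeasure_joint (P : FeedbackFamily X Y n) (Q : ForwardFamily X Y n) :
    IsProbabilityMeasure (joint P Q) :=
  isProbabilityMeasure_jointAux P Q (n + 1) le_rfl

lemma isProbabilityMeasure_nu (P : FeedbackFamily X Y n) (Q : ForwardFamily X Y n) :
    IsProbabilityMeasure (nu P Q) := by
  haveI := isProbabilityMeasure_joint P Q
  exact Measure.isProbabilityMeasure_map measurable_snd.aemeasurable

lemma isProbabilityMeasure_backProd (P : FeedbackFamily X Y n)
    (lam : Measure (∀ j : Fin (n + 1), Y j)) [IsProbabilityMeasure lam] :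
    IsProbabilityMeasure (backProd P lam) := by
  haveI := isMarkovKernel_back P n le_rfl
  haveI : IsMarkovKernel ((back P n le_rfl).comap (restr n) (measurable_restr n)) :=
    inferInstance
  exact Measure.isProbabilityMeasure_map measurable_swap.aemeasurable

lemma backProd_map_snd (P : FeedbackFamily X Y n)
    (lam : Measure (∀ j : Fin (n + 1), Y j)) [IsProbabilityMeasure lam] :
    (backProd P lam).map Prod.snd = lam := by
  haveI := isMarkovKernel_back P n le_rfl
  haveI : IsMarkovKernel ((back P n le_rfl).comap (restr n) (measurable_restr n)) :=
    inferInstance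
  rw [backProd, Measure.map_map measurable_snd measurable_swap]
  have h : (Prod.snd ∘ Prod.swap :
      (∀ j : Fin (n + 1), Y j) × (∀ j : Fin (n + 1), X j) → _) = Prod.fst := rfl
  rw [h]
  exact Measure.fst_compProd lam _

lemma backProd_withDensity (P : FeedbackFamily X Y n)
    {nu' lam : Measure (∀ j : Fin (n + 1), Y j)}
    [IsProbabilityMeasure nu'] [IsProbabilityMeasure lam]
    (h : nu' ≪ lam) :
    backProd P nu' = (backProd P lam).withDensity (fun z => nu'.rnDeriv lam z.2) := by
  haveI := isMarkovKernel_back P n le_rfl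
  haveI : IsMarkovKernel ((back P n le_rfl).comap (restr n) (measurable_restr n)) :=
    inferInstance
  have hρ : Measurable (nu'.rnDeriv lam) := Measure.measurable_rnDeriv _ _
  calc backProd P nu'
      = ((lam.withDensity (nu'.rnDeriv lam)) ⊗ₘ
          ((back P n le_rfl).comap (restr n) (measurable_restr n))).map Prod.swap := by
        rw [Measure.withDensity_rnDeriv_eq nu' lam h, backProd]
    _ = (((lam ⊗ₘ ((back P n le_rfl).comap (restr n) (measurable_restr n))).withDensity
          (fun p => nu'.rnDeriv lam p.1))).map Prod.swap := by
        rw [withDensity_compProd_left lam _ hρ]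
    _ = (backProd P lam).withDensity (fun z => nu'.rnDeriv lam z.2) := by
        rw [map_swap_withDensity _
          (show Measurable fun p : ((j : Fin (n + 1)) → Y j) × ((j : Fin (n + 1)) → X j) =>
            nu'.rnDeriv lam p.1 from hρ.comp measurable_fst)]
        rfl

end AuxStruct

section Statements

variable {X Y : ℕ → Type*} {n : ℕ}
  [∀ i, TopologicalSpace (X i)] [∀ i, MeasurableSpace (X i)] [∀ i, BorelSpace (X i)]
  [∀ i, PolishSpace (X i)]
  [∀ i, TopologicalSpace (Y i)] [∀ i, MeasurableSpace (Y i)] [∀ i, BorelSpace (Y i)]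
  [∀ i, PolishSpace (Y i)]

/-- Variational equality (minimization): for every probability
measure `λ` on `Y_{0,n}`, `I(←P,→Q) ≤ D(←P⊗→Q ‖ ←P⊗λ)`, and `I(←P,→Q)` equals the
infimum over all such `λ`, attained at the marginal `ν_{0,n}`. -/
theorem directedInfo_variational_min
    (P : FeedbackFamily X Y n) (Q : ForwardFamily X Y n) :
    (∀ lam : Measure (∀ j : Fin (n + 1), Y j), IsProbabilityMeasure lam →
      DI P Q ≤ KL (joint P Q) (backProd P lam)) ∧
    (DI P Q = ⨅ (lam : Measure (∀ j : Fin (n + 1), Y j)) (_ : IsProbabilityMeasure lam),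
      KL (joint P Q) (backProd P lam)) ∧
    DI P Q = KL (joint P Q) (backProd P (nu P Q)) := by
  haveI hμ : IsProbabilityMeasure (joint P Q) := isProbabilityMeasure_joint P Q
  haveI hν : IsProbabilityMeasure (nu P Q) := isProbabilityMeasure_nu P Q
  haveI hBn : IsProbabilityMeasure (backProd P (nu P Q)) := isProbabilityMeasure_backProd P _
  have key : ∀ lam : Measure (∀ j : Fin (n + 1), Y j), IsProbabilityMeasure lam →
      KL (joint P Q) (backProd P (nu P Q)) ≤ KL (joint P Q) (backProd P lam) := by
    intro lam hlam
    haveI := hlam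
    haveI hBl : IsProbabilityMeasure (backProd P lam) := isProbabilityMeasure_backProd P lam
    by_cases hc : joint P Q ≪ backProd P lam ∧ Integrable (llr (joint P Q) (backProd P lam))
        (joint P Q)
    · obtain ⟨hac, hint⟩ := hc
      have hμT : (joint P Q).map Prod.snd = nu P Q := rfl
      have hνlam : nu P Q ≪ lam := by
        have := hac.map (f := Prod.snd) measurable_snd
        rwa [backProd_map_snd P lam] at this
      have hBνeq : backProd P (nu P Q)
          = (backProd P lam).withDensity (fun z => (nu P Q).rnDeriv lam z.2) :=
        backProd_withDensity P hνlam
      obtain ⟨h1, h2, h3⟩ := kl_comparison measurable_snd hμT hνlam hBνeq hac hint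
      rw [KL, if_pos ⟨h1, h2⟩]
      conv_rhs => rw [KL]
      rw [if_pos ⟨hac, hint⟩]
      exact ENNReal.ofReal_le_ofReal h3
    · conv_rhs => rw [KL]
      rw [if_neg hc]
      exact le_top
  refine ⟨key, ?_, rfl⟩
  refine le_antisymm (le_iInf fun lam => le_iInf fun hlam => key lam hlam) ?_
  refine iInf_le_of_le (nu P Q) (iInf_le_of_le hν ?_)
  exact le_rfl

end Statements

end PaperDI
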